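/- Each of the lines L₀ (through D₀ and D₁) and L₄ (through D₄ and D₅) meets the parabola 𝒫 in exactly one point; that is, L₀ and L₄ are tangent to the parabola with focus O and directrix y = −2s. -/
import Mathlib


/- STATEMENT 12: With s = sin(π/18)·cos(π/9) and 𝒫 = {(x,y) : x² = 4sy + 4s²} the
parabola with focus O and directrix y = −2s, each of the lines L₀ (through D₀ and D₁)
and L₄ (through D₄ and D₅) meets 𝒫 in exactly one point, i.e. is tangent to 𝒫. -/

open Real

noncomputable section

abbrev Pt := EuclideanSpace ℝ (Fin 2)

def pt (x y : ℝ) : Pt := (WithLp.equiv 2 _).symm ![x, y]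

/-- The affine line through two points `A` and `B`. -/
def lineThrough (A B : Pt) : Set Pt := {P | ∃ t : ℝ, P = A + t • (B - A)}

/-- Vertices of the regular 9-gon: `D i = (cos(2πi/9 + 17π/18), sin(2πi/9 + 17π/18))`. -/
def D (i : ℤ) : Pt :=
  pt (Real.cos (2 * π * i / 9 + 17 * π / 18)) (Real.sin (2 * π * i / 9 + 17 * π / 18))

/-- The constant s = sin(π/18)·cos(π/9). -/
def s : ℝ := Real.sin (π / 18) * Real.cos (π / 9)

/-- The parabola x² = 4sy + 4s², with focus the origin and directrix y = −2s. -/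
def parab : Set Pt := {p : Pt | (p 0) ^ 2 = 4 * s * (p 1) + 4 * s ^ 2}

/-! ### Auxiliary lemmas -/

lemma pt_app0 (x y : ℝ) : pt x y 0 = x := rfl
lemma pt_app1 (x y : ℝ) : pt x y 1 = y := rfl

lemma comb_app (A B : Pt) (t : ℝ) (i : Fin 2) :
    (A + t • (B - A)) i = A i + t * (B i - A i) := by
  simp [PiLp.add_apply, PiLp.smul_apply, PiLp.sub_apply]

lemma D0_eq : D 0 = pt (-Real.cos (π/18)) (Real.sin (π/18)) := by
  have h : 2 * π * ((0:ℤ):ℝ) / 9 + 17 * π / 18 = π - π/18 := by push_cast; ring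
  rw [D, h, Real.cos_pi_sub, Real.sin_pi_sub]

lemma D1_eq : D 1 = pt (-(4*Real.cos (π/18)^3 - 3*Real.cos (π/18)))
    (-(3*Real.sin (π/18) - 4*Real.sin (π/18)^3)) := by
  have h : 2 * π * ((1:ℤ):ℝ) / 9 + 17 * π / 18 = 3*(π/18) + π := by push_cast; ring
  rw [D, h, Real.cos_add_pi, Real.sin_add_pi, Real.cos_three_mul, Real.sin_three_mul]

lemma D4_eq : D 4 = pt (4*Real.cos (π/18)^3 - 3*Real.cos (π/18))
    (-(3*Real.sin (π/18) - 4*Real.sin (π/18)^3)) := by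
  have h : 2 * π * ((4:ℤ):ℝ) / 9 + 17 * π / 18 = 2*π - 3*(π/18) := by push_cast; ring
  rw [D, h, Real.cos_two_pi_sub, Real.sin_two_pi_sub, Real.cos_three_mul, Real.sin_three_mul]

lemma D5_eq : D 5 = pt (Real.cos (π/18)) (Real.sin (π/18)) := by
  have h : 2 * π * ((5:ℤ):ℝ) / 9 + 17 * π / 18 = π/18 + 2*π := by push_cast; ring
  rw [D, h, Real.cos_add_two_pi, Real.sin_add_two_pi]

lemma s_eq : s = Real.sin (π/18) * (2*Real.cos (π/18)^2 - 1) := by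
  rw [s, show π/9 = 2*(π/18) by ring, Real.cos_two_mul]

lemma sin_pos : 0 < Real.sin (π/18) :=
  Real.sin_pos_of_pos_of_lt_pi (by positivity) (by linarith [Real.pi_pos])

lemma cos_pos' : 0 < Real.cos (π/18) :=
  Real.cos_pos_of_mem_Ioo ⟨by linarith [Real.pi_pos], by linarith [Real.pi_pos]⟩

lemma tangent_gen (A B : Pt) (t₀ : ℝ)
    (h : ∀ t : ℝ, (A + t • (B - A)) ∈ parab ↔ t = t₀) :
    ∃! X : Pt, X ∈ lineThrough A B ∩ parab := by
  refine ⟨A + t₀ • (B - A), ⟨⟨t₀, rfl⟩, (h t₀).2 rfl⟩, ?_⟩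
  rintro Y ⟨⟨t, rfl⟩, hp⟩
  rw [(h t).1 hp]

theorem L0_L4_tangent_to_parabola :
    (∃! X : Pt, X ∈ lineThrough (D 0) (D 1) ∩ parab) ∧
    (∃! X : Pt, X ∈ lineThrough (D 4) (D 5) ∩ parab) := by
  set σ := Real.sin (π/18) with hσdef
  set c := Real.cos (π/18) with hcdef
  have hσ : 0 < σ := sin_pos
  have hc : 0 < c := cos_pos'
  have hpyth : σ^2 + c^2 = 1 := Real.sin_sq_add_cos_sq (π/18)
  constructor
  · refine tangent_gen _ _ ((4*σ^2 - 1)/(4*σ^2)) (fun t => ?_)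
    simp only [parab, Set.mem_setOf_eq, comb_app, D0_eq, D1_eq, pt_app0, pt_app1, s_eq,
      ← hσdef, ← hcdef]
    constructor
    · intro hp
      have key : (c*(4*σ^2*t - (4*σ^2 - 1)))^2 = 0 := by
        linear_combination hp - (8*c^2*t - 16*c^2*t^2 + 16*c^4*t^2 + 16*σ^2*t - 16*σ^2*c^2
          - 16*σ^2*c^2*t^2) * hpyth
      have h2 : c*(4*σ^2*t - (4*σ^2 - 1)) = 0 := by
        have := sq_eq_zero_iff.1 key
        exact this
      have h3 : 4*σ^2*t - (4*σ^2 - 1) = 0 := by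
        rcases mul_eq_zero.1 h2 with h | h
        · exact absurd h (ne_of_gt hc)
        · exact h
      rw [eq_div_iff (by positivity)]
      linarith
    · intro ht
      have h3 : 4*σ^2*t = 4*σ^2 - 1 := by
        rw [ht]; field_simp
      linear_combination (c^2*(4*σ^2*t - (4*σ^2 - 1))) * h3 + (8*c^2*t - 16*c^2*t^2
        + 16*c^4*t^2 + 16*σ^2*t - 16*σ^2*c^2 - 16*σ^2*c^2*t^2) * hpyth
  · refine tangent_gen _ _ (1/(4*σ^2)) (fun t => ?_)
    simp only [parab, Set.mem_setOf_eq, comb_app, D4_eq, D5_eq, pt_app0, pt_app1, s_eq,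
      ← hσdef, ← hcdef]
    constructor
    · intro hp
      have key : (c*(4*σ^2*t - 1))^2 = 0 := by
        linear_combination hp - (-8*c^2 + 24*c^2*t - 16*c^2*t^2 + 16*c^4 - 32*c^4*t
          + 16*c^4*t^2 + 16*σ^2 - 16*σ^2*t - 32*σ^2*c^2 + 32*σ^2*c^2*t - 16*σ^2*c^2*t^2) * hpyth
      have h2 : c*(4*σ^2*t - 1) = 0 := sq_eq_zero_iff.1 key
      have h3 : 4*σ^2*t - 1 = 0 := by
        rcases mul_eq_zero.1 h2 with h | h
        · exact absurd h (ne_of_gt hc)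
        · exact h
      rw [eq_div_iff (by positivity)]
      linarith
    · intro ht
      have h3 : 4*σ^2*t = 1 := by
        rw [ht]; field_simp
      linear_combination (c^2*(4*σ^2*t - 1)) * h3 + (-8*c^2 + 24*c^2*t - 16*c^2*t^2 + 16*c^4
        - 32*c^4*t + 16*c^4*t^2 + 16*σ^2 - 16*σ^2*t - 32*σ^2*c^2 + 32*σ^2*c^2*t
        - 16*σ^2*c^2*t^2) * hpyth

end
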